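/- Let P be an n×n×n complex tensor and i ∈ {1,2,3}. Suppose P is i-slice-non-singular (i.e., some ℂ-linear combination of its i-slices is a non-singular matrix) and that P satisfies the commutation relations (P*_i e_j)·adj(P*_i v)·(P*_i e_k) = (P*_i e_k)·adj(P*_i v)·(P*_i e_j) for all v ∈ ℂⁿ and all 1 ≤ j < k ≤ n. Then there exists (g₁,g₂,g₃) ∈ G(ℂ) such that every i-slice of P(g₁,g₂,g₃) is an upper triangular matrix. -/

import Mathlib

open scoped BigOperators
open Matrix

/-- An `n×n×n` tensor with entries in `K`. -/
abbrev Tensor (n : ℕ) (K : Type*) := Fin n × Fin n × Fin n → K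

namespace Tensor

variable {n : ℕ} {K : Type*}

section CommRing
variable [CommRing K]

/-- The right action of a triple of `n×n` matrices on an `n×n×n` tensor:
`(P(g₁,g₂,g₃))_{ijk} = Σ_{a,b,c} P_{abc} g₁(a,i) g₂(b,j) g₃(c,k)`. -/
def act (P : Tensor n K) (g₁ g₂ g₃ : Matrix (Fin n) (Fin n) K) : Tensor n K :=
  fun x => ∑ a, ∑ b, ∑ c, P (a, b, c) * g₁ a x.1 * g₂ b x.2.1 * g₃ c x.2.2

/-- The diagonal tensor `D`, with `D_{iii} = 1` and all other entries `0`. -/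
def DT (n : ℕ) (K : Type*) [CommRing K] : Tensor n K :=
  fun x => if x.1 = x.2.1 ∧ x.2.1 = x.2.2 then 1 else 0

/-- The orbit of the diagonal tensor `D` under `GL(n,K)×GL(n,K)×GL(n,K)`. -/
def orbitD (n : ℕ) (K : Type*) [CommRing K] : Set (Tensor n K) :=
  {P | ∃ g₁ g₂ g₃ : Matrix (Fin n) (Fin n) K,
    IsUnit g₁.det ∧ IsUnit g₂.det ∧ IsUnit g₃.det ∧ P = (DT n K).act g₁ g₂ g₃}

/-- `P` admits a decomposition as a sum of `r` rank-one tensors. -/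
def HasRankLE (P : Tensor n K) (r : ℕ) : Prop :=
  ∃ u v w : Fin r → Fin n → K, P = fun x => ∑ l, u l x.1 * v l x.2.1 * w l x.2.2

/-- The tensor rank of `P`: the smallest `r` such that `P` is a sum of `r` rank-one tensors. -/
noncomputable def rank (P : Tensor n K) : ℕ := sInf {r | P.HasRankLE r}

/-- The three flattenings of `P` to an `n²×n` matrix; the columns of `flatten i P` are
indexed by the `i`-th index of `P`. -/
def flatten (i : Fin 3) (P : Tensor n K) : Matrix (Fin n × Fin n) (Fin n) K :=
  ![Matrix.of fun p a => P (a, p.1, p.2),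
    Matrix.of fun p b => P (p.1, b, p.2),
    Matrix.of fun p c => P (p.1, p.2, c)] i

/-- Contraction `P *_i v` of the `i`-th index of `P` against a vector `v`. -/
def contr (i : Fin 3) (P : Tensor n K) (v : Fin n → K) : Matrix (Fin n) (Fin n) K :=
  ![Matrix.of fun j k => ∑ a, P (a, j, k) * v a,
    Matrix.of fun j k => ∑ b, P (j, b, k) * v b,
    Matrix.of fun j k => ∑ c, P (j, k, c) * v c] i

/-- The `j`-th `i`-slice of `P`, i.e. `P *_i e_j`. -/
def slice (i : Fin 3) (P : Tensor n K) (j : Fin n) : Matrix (Fin n) (Fin n) K :=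
  contr i P (Pi.single j 1)

/-- The commutation relations in index `i`:
`(P*_i e_j)·adj(P*_i v)·(P*_i e_k) = (P*_i e_k)·adj(P*_i v)·(P*_i e_j)`
for all `v` and all `j < k`. -/
def CommRel (i : Fin 3) (P : Tensor n K) : Prop :=
  ∀ (v : Fin n → K) (j k : Fin n), j < k →
    slice i P j * (contr i P v).adjugate * slice i P k
      = slice i P k * (contr i P v).adjugate * slice i P j

/-- The matrix `P *_i x`, where `x` is a vector of indeterminates. -/
noncomputable def contrX (i : Fin 3) (P : Tensor n K) :
    Matrix (Fin n) (Fin n) (MvPolynomial (Fin n) K) :=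
  ![Matrix.of fun j k => ∑ a, MvPolynomial.C (P (a, j, k)) * MvPolynomial.X a,
    Matrix.of fun j k => ∑ b, MvPolynomial.C (P (j, b, k)) * MvPolynomial.X b,
    Matrix.of fun j k => ∑ c, MvPolynomial.C (P (j, k, c)) * MvPolynomial.X c] i

/-- `h_i(P;x) = det (P *_i x)`, a polynomial in the indeterminates `x`. -/
noncomputable def hpoly (i : Fin 3) (P : Tensor n K) : MvPolynomial (Fin n) K :=
  (contrX i P).det

/-- The Hessian matrix of a polynomial in the indeterminates `x`. -/
noncomputable def hess (p : MvPolynomial (Fin n) K) :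
    Matrix (Fin n) (Fin n) (MvPolynomial (Fin n) K) :=
  Matrix.of fun a b => MvPolynomial.pderiv a (MvPolynomial.pderiv b p)

/-- `f_i(P;x) = (-1)^(n-1) det (H_x (h_i(P;x)))`. -/
noncomputable def fpoly (i : Fin 3) (P : Tensor n K) : MvPolynomial (Fin n) K :=
  (-1) ^ (n - 1) * (hess (hpoly i P)).det

/-- Substitution `x ↦ g x` in a polynomial in the indeterminates `x`. -/
noncomputable def substX (g : Matrix (Fin n) (Fin n) K) (p : MvPolynomial (Fin n) K) :
    MvPolynomial (Fin n) K :=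
  MvPolynomial.aeval (fun j => ∑ k, MvPolynomial.C (g j k) * MvPolynomial.X k) p

end CommRing

/-- A complex tensor is real when all of its entries are real. -/
def IsReal (P : Tensor n ℂ) : Prop := ∀ x, (P x).im = 0

/-- The inclusion of real tensors into complex tensors. -/
noncomputable def toC (n : ℕ) : Tensor n ℝ → Tensor n ℂ := fun P x => (P x : ℂ)

/-- The orbit `𝒟(ℝ)` of `D` under `GL(n,ℝ)³`, viewed inside the complex tensors. -/
def orbitDR (n : ℕ) : Set (Tensor n ℂ) := toC n '' orbitD n ℝ

/-- The border rank of `P`: the smallest `r` such that `P` is a limit of tensors of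
rank at most `r`. -/
noncomputable def borderRank (P : Tensor n ℂ) : ℕ :=
  sInf {r | P ∈ closure {Q : Tensor n ℂ | Q.HasRankLE r}}

/-- The first nonzero entry of every row of `g` equals `1`. -/
def FirstNonzeroOne (g : Matrix (Fin n) (Fin n) ℂ) : Prop :=
  ∀ r c : Fin n, g r c ≠ 0 → (∀ c' : Fin n, c' < c → g r c' = 0) → g r c = 1

/-- The first `2k` rows of `g` are non-real and not purely imaginary, and occur in complex
conjugate pairs (row `2j+1` conjugate to row `2j`); the remaining rows are real. -/
def ConjPairStructure (k : ℕ) (g : Matrix (Fin n) (Fin n) ℂ) : Prop :=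
  (∀ m m' : Fin n, (m : ℕ) < 2 * k → Even (m : ℕ) → (m' : ℕ) = (m : ℕ) + 1 →
      ∀ c, g m' c = (starRingEnd ℂ) (g m c)) ∧
  (∀ m : Fin n, (m : ℕ) < 2 * k → (∃ c, (g m c).im ≠ 0) ∧ (∃ c, (g m c).re ≠ 0)) ∧
  (∀ m : Fin n, 2 * k ≤ (m : ℕ) → ∀ c, (g m c).im = 0)

/-- A normalized decomposition `P = D(g₁,g₂,g₃)` exhibiting signature `(n-2k, k)`:
the first nonzero entry of every row of `g₁,g₂` is `1`, and each `gᵢ` has its first `2k`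
rows non-real occurring in conjugate pairs, with the remaining rows real. -/
def SigDecomp (P : Tensor n ℂ) (k : ℕ) (g₁ g₂ g₃ : Matrix (Fin n) (Fin n) ℂ) : Prop :=
  2 * k ≤ n ∧ IsUnit g₁.det ∧ IsUnit g₂.det ∧ IsUnit g₃.det ∧
  P = (DT n ℂ).act g₁ g₂ g₃ ∧
  FirstNonzeroOne g₁ ∧ FirstNonzeroOne g₂ ∧
  ConjPairStructure k g₁ ∧ ConjPairStructure k g₂ ∧ ConjPairStructure k g₃

/-- `P` has signature `(n-2k, k)`: its unique rank-`n` decomposition has exactly `2k`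
non-real rank-one summands, occurring in conjugate pairs. -/
def HasSignature (P : Tensor n ℂ) (k : ℕ) : Prop :=
  ∃ g₁ g₂ g₃ : Matrix (Fin n) (Fin n) ℂ, SigDecomp P k g₁ g₂ g₃

/-- Cayley's hyperdeterminant of a `2×2×2` tensor. -/
noncomputable def Delta (P : Tensor 2 ℂ) : ℂ :=
  (P (0,0,0) ^ 2 * P (1,1,1) ^ 2 + P (0,0,1) ^ 2 * P (1,1,0) ^ 2
    + P (0,1,0) ^ 2 * P (1,0,1) ^ 2 + P (0,1,1) ^ 2 * P (1,0,0) ^ 2)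
  - 2 * (P (0,0,0) * P (0,0,1) * P (1,1,0) * P (1,1,1)
    + P (0,0,0) * P (0,1,0) * P (1,0,1) * P (1,1,1)
    + P (0,0,0) * P (0,1,1) * P (1,0,0) * P (1,1,1)
    + P (0,0,1) * P (0,1,0) * P (1,0,1) * P (1,1,0)
    + P (0,0,1) * P (0,1,1) * P (1,1,0) * P (1,0,0)
    + P (0,1,0) * P (0,1,1) * P (1,0,1) * P (1,0,0))
  + 4 * (P (0,0,0) * P (0,1,1) * P (1,0,1) * P (1,1,0)
    + P (0,0,1) * P (0,1,0) * P (1,0,0) * P (1,1,1))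

/-- The Levi-Civita symbol on three indices, `ε₁₂₃ = 1`. -/
noncomputable def eps (i j k : Fin 3) : ℂ :=
  if (i, j, k) = ((0 : Fin 3), (1 : Fin 3), (2 : Fin 3)) ∨ (i, j, k) = (1, 2, 0)
      ∨ (i, j, k) = (2, 0, 1) then 1
  else if (i, j, k) = ((2 : Fin 3), (1 : Fin 3), (0 : Fin 3)) ∨ (i, j, k) = (1, 0, 2)
      ∨ (i, j, k) = (0, 2, 1) then -1
  else 0

/-- The degree-6 invariant `τ₃` of `3×3×3` tensors, given by a six-fold Levi-Civita
contraction. -/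
noncomputable def tau3 (P : Tensor 3 ℂ) : ℂ :=
  ∑ i : Fin 3 × Fin 3 × Fin 3, ∑ j : Fin 3 × Fin 3 × Fin 3, ∑ k : Fin 3 × Fin 3 × Fin 3,
    ∑ l : Fin 3 × Fin 3 × Fin 3, ∑ m : Fin 3 × Fin 3 × Fin 3, ∑ o : Fin 3 × Fin 3 × Fin 3,
      P i * P j * P k * P l * P m * P o *
        eps i.1 j.1 k.1 * eps j.2.1 k.2.1 l.2.1 * eps k.2.2 l.2.2 m.2.2 *
        eps l.1 m.1 o.1 * eps m.2.1 o.2.1 i.2.1 * eps o.2.2 i.2.2 j.2.2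

end Tensor


section Aux

open Module Set

private lemma exists_common_eigenvector' {V : Type*} [AddCommGroup V] [Module ℂ V]
    [FiniteDimensional ℂ V] [Nontrivial V] :
    ∀ (m : ℕ) (f : Fin m → Module.End ℂ V), (∀ i j, Commute (f i) (f j)) →
    ∃ (w : V) (μ : Fin m → ℂ), w ≠ 0 ∧ ∀ i, f i w = μ i • w := by
  intro m
  induction m with
  | zero =>
    intro f _
    obtain ⟨w, hw⟩ := exists_ne (0 : V)
    exact ⟨w, Fin.elim0, hw, fun i => i.elim0⟩
  | succ m ih =>
    intro f hc
    obtain ⟨w, μ, hw, heig⟩ := ih (fun i => f i.castSucc) (fun i j => hc _ _)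
    set E : Submodule ℂ V := ⨅ i : Fin m, Module.End.eigenspace (f i.castSucc) (μ i) with hE
    have hwE : w ∈ E := by
      rw [Submodule.mem_iInf]
      intro i
      rw [Module.End.mem_eigenspace_iff]
      exact heig i
    have hmaps : ∀ x ∈ E, f (Fin.last m) x ∈ E := by
      intro x hx
      rw [Submodule.mem_iInf]
      intro i
      rw [Module.End.mem_eigenspace_iff]
      have hx' : f i.castSucc x = μ i • x := by
        have := (Submodule.mem_iInf _).mp hx i
        rwa [Module.End.mem_eigenspace_iff] at this
      have hcomm := hc i.castSucc (Fin.last m)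
      calc f i.castSucc (f (Fin.last m) x) = f (Fin.last m) (f i.castSucc x) := by
            have := congrFun (congrArg DFunLike.coe hcomm.eq) x
            simpa [Module.End.mul_apply] using this
        _ = μ i • f (Fin.last m) x := by rw [hx', _root_.map_smul]
    have : Nontrivial E := by
      refine ⟨⟨w, hwE⟩, 0, ?_⟩
      simp [Subtype.ext_iff, hw]
    set g : Module.End ℂ E := (f (Fin.last m)).restrict hmaps with hg
    obtain ⟨ν, hν⟩ := Module.End.exists_eigenvalue g
    obtain ⟨x, hx⟩ := hν.exists_hasEigenvector
    refine ⟨(x : V), Fin.snoc μ ν, ?_, ?_⟩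
    · simpa [Submodule.coe_eq_zero] using hx.right
    · intro i
      refine Fin.lastCases ?_ ?_ i
      · have := hx.apply_eq_smul
        have h2 : f (Fin.last m) (x : V) = ((g x : E) : V) := by
          simp [hg, LinearMap.restrict_apply]
        rw [Fin.snoc_last, h2, this]
        simp
      · intro i
        have hxE : (x : V) ∈ E := x.2
        have := (Submodule.mem_iInf _).mp hxE i
        rw [Module.End.mem_eigenspace_iff] at this
        rw [Fin.snoc_castSucc]
        exact this

private lemma exists_triangular_basis' :
    ∀ (N : ℕ) {V : Type} [AddCommGroup V] [Module ℂ V] [FiniteDimensional ℂ V],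
    finrank ℂ V = N → ∀ (m : ℕ) (f : Fin m → Module.End ℂ V),
    (∀ i j, Commute (f i) (f j)) →
    ∃ b : Basis (Fin N) ℂ V, ∀ i j, f i (b j) ∈ Submodule.span ℂ (b '' Set.Iic j) := by
  intro N
  induction N with
  | zero =>
    intro V _ _ _ hrk m f _
    have : Subsingleton V := by
      have := Module.finrank_zero_iff (R := ℂ) (M := V)
      exact this.mp hrk
    exact ⟨Basis.empty V, fun i j => j.elim0⟩
  | succ N ih =>
    intro V _ _ _ hrk m f hc
    have : Nontrivial V := by
      have : 0 < finrank ℂ V := by omega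
      exact Module.nontrivial_of_finrank_pos this
    obtain ⟨w, μ, hw, heig⟩ := exists_common_eigenvector' m f hc
    set p : Submodule ℂ V := Submodule.span ℂ {w} with hp
    have hinv : ∀ i, p ≤ p.comap (f i) := by
      intro i x hx
      obtain ⟨t, rfl⟩ := Submodule.mem_span_singleton.mp hx
      have : f i (t • w) = (t * μ i) • w := by rw [_root_.map_smul, heig i, smul_smul]
      simp only [Submodule.mem_comap, this]
      exact Submodule.smul_mem _ _ (Submodule.mem_span_singleton_self w)
    set fbar : Fin m → Module.End ℂ (V ⧸ p) := fun i => p.mapQ p (f i) (hinv i) with hfbar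
    have hcbar : ∀ i j, Commute (fbar i) (fbar j) := by
      intro i j
      apply LinearMap.ext
      intro z
      obtain ⟨x, rfl⟩ := Submodule.Quotient.mk_surjective p z
      have hx := congrFun (congrArg DFunLike.coe (hc i j).eq) x
      simp only [Module.End.mul_apply] at hx ⊢
      simp only [hfbar, Submodule.mkQ_apply, Submodule.mapQ_apply, hx]
    have hrkq : finrank ℂ (V ⧸ p) = N := by
      have h1 := Submodule.finrank_quotient_add_finrank p
      have h2 : finrank ℂ p = 1 := finrank_span_singleton hw
      omega
    obtain ⟨b', hb'⟩ := ih hrkq m fbar hcbar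
    set u : Fin N → V := fun c => Function.surjInv (Submodule.Quotient.mk_surjective p) (b' c)
      with hu
    have hπu : ∀ c, Submodule.Quotient.mk (u c) = b' c := fun c =>
      Function.surjInv_eq (Submodule.Quotient.mk_surjective p) (b' c)
    set v : Fin (N+1) → V := Fin.cons w u with hv
    have hdesc : ∀ (s : Set (Fin N)) (x : V),
        (Submodule.Quotient.mk x : V ⧸ p) ∈ Submodule.span ℂ (b' '' s) →
        x ∈ Submodule.span ℂ (v '' (insert 0 (Fin.succ '' s))) := by
      intro s x hx
      have himg : b' '' s = p.mkQ '' ((v ∘ Fin.succ) '' s) := by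
        rw [Set.image_image]
        apply Set.image_congr
        intro a _
        simp [hv, Fin.cons_succ, hπu a]
      rw [himg, ← Submodule.map_span] at hx
      obtain ⟨y, hy, hyx⟩ := Submodule.mem_map.mp hx
      have hker : x - y ∈ p := by
        rw [← Submodule.ker_mkQ (p := p), LinearMap.mem_ker, map_sub, hyx,
          Submodule.mkQ_apply, sub_self]
      have hxy : x = y + (x - y) := by abel
      rw [hxy]
      apply Submodule.add_mem
      · apply Submodule.span_mono (s := (v ∘ Fin.succ) '' s)
        · rw [Set.image_comp]
          exact Set.image_mono (Set.subset_insert _ _)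
        · exact hy
      · apply Submodule.span_le.mpr ?_ hker
        rw [Set.singleton_subset_iff]
        have : w ∈ v '' (insert 0 (Fin.succ '' s)) :=
          ⟨0, Set.mem_insert _ _, by simp [hv]⟩
        exact Submodule.subset_span this
    have hspan : ⊤ ≤ Submodule.span ℂ (Set.range v) := by
      intro x _
      have hx : (Submodule.Quotient.mk x : V ⧸ p) ∈ Submodule.span ℂ (b' '' Set.univ) := by
        rw [Set.image_univ, b'.span_eq]; trivial
      have := hdesc Set.univ x hx
      exact Submodule.span_mono (Set.image_subset_range _ _) this
    have hcard : Fintype.card (Fin (N+1)) = finrank ℂ V := by simp [hrk]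
    set b : Basis (Fin (N+1)) ℂ V := basisOfTopLeSpanOfCardEqFinrank v hspan hcard with hb
    have hbv : ⇑b = v := coe_basisOfTopLeSpanOfCardEqFinrank v hspan hcard
    refine ⟨b, ?_⟩
    intro i j
    rw [hbv]
    refine Fin.cases ?_ ?_ j
    · have : f i (v 0) = μ i • v 0 := by simp [hv, heig i]
      rw [this]
      exact Submodule.smul_mem _ _ (Submodule.subset_span ⟨0, Set.mem_Iic.mpr le_rfl, rfl⟩)
    · intro c
      have h1 : (Submodule.Quotient.mk (f i (v c.succ)) : V ⧸ p)
          ∈ Submodule.span ℂ (b' '' Set.Iic c) := by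
        have : (Submodule.Quotient.mk (f i (v c.succ)) : V ⧸ p) = fbar i (b' c) := by
          rw [← hπu c, hfbar]
          simp only [hv, Fin.cons_succ, Submodule.mkQ_apply, Submodule.mapQ_apply]
        rw [this]
        exact hb' i c
      have h2 := hdesc (Set.Iic c) _ h1
      refine Submodule.span_mono ?_ h2
      intro z hz
      rcases hz with ⟨a, ha, rfl⟩
      rcases ha with rfl | ⟨a', ha', rfl⟩
      · exact ⟨0, by simp, rfl⟩
      · exact ⟨a'.succ, by simpa [Fin.succ_le_succ_iff] using ha', rfl⟩

private lemma matrix_triangularize' {N m : ℕ} (B : Fin m → Matrix (Fin N) (Fin N) ℂ)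
    (hc : ∀ i j, Commute (B i) (B j)) :
    ∃ U : Matrix (Fin N) (Fin N) ℂ, IsUnit U.det ∧
      ∀ i a c, c < a → (U⁻¹ * B i * U) a c = 0 := by
  set f : Fin m → Module.End ℂ (Fin N → ℂ) := fun i => Matrix.mulVecLin (B i) with hf
  have hcf : ∀ i j, Commute (f i) (f j) := by
    intro i j
    have := congrArg Matrix.mulVecLin (hc i j).eq
    simpa [hf, Commute, SemiconjBy, Matrix.mulVecLin_mul, Module.End.mul_eq_comp] using this
  obtain ⟨b, hb⟩ := exists_triangular_basis' N (Module.finrank_fin_fun ℂ) m f hcf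
  set U : Matrix (Fin N) (Fin N) ℂ := Matrix.of fun a j => b j a with hU
  set W : Matrix (Fin N) (Fin N) ℂ := Matrix.of fun j a => b.repr (Pi.single a 1) j with hW
  have key : ∀ (x : Fin N → ℂ) (j : Fin N),
      ∑ a, b.repr (Pi.single a 1) j * x a = b.repr x j := by
    intro x j
    have hx : x = ∑ a, x a • (Pi.single a (1:ℂ) : Fin N → ℂ) := by
      ext y
      simp [Pi.single_apply]
    conv_rhs => rw [hx]
    rw [map_sum]
    simp only [_root_.map_smul, Finsupp.coe_finset_sum, Finsupp.coe_smul, Finset.sum_apply,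
      Pi.smul_apply, smul_eq_mul]
    exact Finset.sum_congr rfl fun a _ => mul_comm _ _
  have hWU : W * U = 1 := by
    ext j k
    rw [Matrix.mul_apply, Matrix.one_apply]
    simp only [hU, hW, Matrix.of_apply]
    rw [key (b k) j, b.repr_self]
    simp [Finsupp.single_apply, eq_comm]
  have hdet : IsUnit U.det := Matrix.isUnit_det_of_left_inverse hWU
  have hUinv : U⁻¹ = W := Matrix.inv_eq_left_inv hWU
  refine ⟨U, hdet, ?_⟩
  intro i a c hca
  have hentry : (U⁻¹ * B i * U) a c = b.repr ((B i).mulVec (b c)) a := by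
    rw [hUinv, Matrix.mul_assoc, Matrix.mul_apply]
    have : ∀ x, (B i * U) x c = ((B i).mulVec (b c)) x := by
      intro x
      rw [Matrix.mul_apply, Matrix.mulVec]
      simp [dotProduct, hU]
    simp only [this]
    simp only [hW, Matrix.of_apply]
    exact key _ a
  rw [hentry]
  have hmem := hb i c
  have hsupp := (Basis.mem_span_image b).mp hmem
  by_contra h
  have ha : a ∈ (b.repr (f i (b c))).support := by
    simp only [Finsupp.mem_support_iff, hf, Matrix.mulVecLin_apply]
    exact h
  have := hsupp ha
  simp only [Set.mem_Iic] at this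
  exact absurd this (not_le.mpr hca)

namespace Tensor

variable {n : ℕ} {K : Type*} [CommRing K]

private lemma slice0 (P : Tensor n K) (j : Fin n) :
    slice 0 P j = Matrix.of fun a b => P (j, a, b) := by
  ext a b
  simp [slice, contr, Pi.single_apply]

private lemma slice1 (P : Tensor n K) (j : Fin n) :
    slice 1 P j = Matrix.of fun a b => P (a, j, b) := by
  ext a b
  simp [slice, contr, Pi.single_apply]

private lemma slice2 (P : Tensor n K) (j : Fin n) :
    slice 2 P j = Matrix.of fun a b => P (a, b, j) := by
  ext a b
  simp [slice, contr, Pi.single_apply]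

private lemma act_one_fst (P : Tensor n K) (g₂ g₃ : Matrix (Fin n) (Fin n) K) (x y z : Fin n) :
    (P.act 1 g₂ g₃) (x, y, z) = ∑ b, ∑ c, P (x, b, c) * g₂ b y * g₃ c z := by
  simp only [act]
  rw [Fintype.sum_eq_single x]
  · refine Finset.sum_congr rfl fun b _ => Finset.sum_congr rfl fun c _ => ?_
    simp [Matrix.one_apply]
  · intro a ha
    refine Finset.sum_eq_zero fun b _ => Finset.sum_eq_zero fun c _ => ?_
    simp [Matrix.one_apply, ha]

private lemma act_one_snd (P : Tensor n K) (g₁ g₃ : Matrix (Fin n) (Fin n) K) (x y z : Fin n) :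
    (P.act g₁ 1 g₃) (x, y, z) = ∑ a, ∑ c, P (a, y, c) * g₁ a x * g₃ c z := by
  simp only [act]
  refine Finset.sum_congr rfl fun a _ => ?_
  rw [Fintype.sum_eq_single y]
  · refine Finset.sum_congr rfl fun c _ => ?_
    simp [Matrix.one_apply]
  · intro b hb
    refine Finset.sum_eq_zero fun c _ => ?_
    simp [Matrix.one_apply, hb]

private lemma act_one_thd (P : Tensor n K) (g₁ g₂ : Matrix (Fin n) (Fin n) K) (x y z : Fin n) :
    (P.act g₁ g₂ 1) (x, y, z) = ∑ a, ∑ b, P (a, b, z) * g₁ a x * g₂ b y := by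
  simp only [act]
  refine Finset.sum_congr rfl fun a _ => Finset.sum_congr rfl fun b _ => ?_
  rw [Fintype.sum_eq_single z]
  · simp [Matrix.one_apply]
  · intro c hc
    simp [Matrix.one_apply, hc]

private lemma slice_act0 (P : Tensor n K) (g₂ g₃ : Matrix (Fin n) (Fin n) K) (j : Fin n) :
    slice 0 (P.act 1 g₂ g₃) j = g₂ᵀ * slice 0 P j * g₃ := by
  ext a b
  rw [slice0, slice0]
  simp only [Matrix.of_apply, Matrix.mul_apply, Matrix.transpose_apply]
  rw [act_one_fst, Finset.sum_comm]
  simp only [Finset.sum_mul]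
  exact Finset.sum_congr rfl fun y _ => Finset.sum_congr rfl fun x _ => by ring

private lemma slice_act1 (P : Tensor n K) (g₁ g₃ : Matrix (Fin n) (Fin n) K) (j : Fin n) :
    slice 1 (P.act g₁ 1 g₃) j = g₁ᵀ * slice 1 P j * g₃ := by
  ext a b
  rw [slice1, slice1]
  simp only [Matrix.of_apply, Matrix.mul_apply, Matrix.transpose_apply]
  rw [act_one_snd, Finset.sum_comm]
  simp only [Finset.sum_mul]
  exact Finset.sum_congr rfl fun y _ => Finset.sum_congr rfl fun x _ => by ring

private lemma slice_act2 (P : Tensor n K) (g₁ g₂ : Matrix (Fin n) (Fin n) K) (j : Fin n) :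
    slice 2 (P.act g₁ g₂ 1) j = g₁ᵀ * slice 2 P j * g₂ := by
  ext a b
  rw [slice2, slice2]
  simp only [Matrix.of_apply, Matrix.mul_apply, Matrix.transpose_apply]
  rw [act_one_thd, Finset.sum_comm]
  simp only [Finset.sum_mul]
  exact Finset.sum_congr rfl fun y _ => Finset.sum_congr rfl fun x _ => by ring

end Tensor

end Aux

/-- an `i`-slice-non-singular tensor satisfying the commutation relations has
a `G(ℂ)`-orbit representative with all `i`-slices upper triangular. -/
theorem statement_3 (n : ℕ) (P : Tensor n ℂ) (i : Fin 3)
    (hns : ∃ v : Fin n → ℂ, IsUnit (Tensor.contr i P v).det)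
    (hcomm : Tensor.CommRel i P) :
    ∃ g₁ g₂ g₃ : Matrix (Fin n) (Fin n) ℂ,
      IsUnit g₁.det ∧ IsUnit g₂.det ∧ IsUnit g₃.det ∧
      ∀ j a b : Fin n, b < a → Tensor.slice i (P.act g₁ g₂ g₃) j a b = 0 := by
  obtain ⟨v₀, hA⟩ := hns
  set A : Matrix (Fin n) (Fin n) ℂ := Tensor.contr i P v₀ with hAdef
  have hadj : ∀ j k, Tensor.slice i P j * A.adjugate * Tensor.slice i P k
      = Tensor.slice i P k * A.adjugate * Tensor.slice i P j := by
    intro j k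
    rcases lt_trichotomy j k with h | h | h
    · exact hcomm v₀ j k h
    · rw [h]
    · exact (hcomm v₀ k j h).symm
  have hAinv : A.adjugate = A.det • A⁻¹ := by
    rw [Matrix.inv_def, smul_smul, Ring.mul_inverse_cancel _ hA, one_smul]
  have hc' : ∀ j k, Tensor.slice i P j * A⁻¹ * Tensor.slice i P k
      = Tensor.slice i P k * A⁻¹ * Tensor.slice i P j := by
    intro j k
    have h := hadj j k
    rw [hAinv] at h
    simp only [Matrix.mul_smul, Matrix.smul_mul] at h
    exact smul_right_injective _ hA.ne_zero h
  have hBc : ∀ j k, Commute (Tensor.slice i P j * A⁻¹) (Tensor.slice i P k * A⁻¹) := by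
    intro j k
    show _ = _
    calc (Tensor.slice i P j * A⁻¹) * (Tensor.slice i P k * A⁻¹)
        = (Tensor.slice i P j * A⁻¹ * Tensor.slice i P k) * A⁻¹ := by
          simp only [Matrix.mul_assoc]
      _ = (Tensor.slice i P k * A⁻¹ * Tensor.slice i P j) * A⁻¹ := by rw [hc']
      _ = (Tensor.slice i P k * A⁻¹) * (Tensor.slice i P j * A⁻¹) := by
          simp only [Matrix.mul_assoc]
  obtain ⟨U, hU, htri⟩ := matrix_triangularize' (fun j => Tensor.slice i P j * A⁻¹) hBc
  have main : ∀ j a b, b < a → (U⁻¹ * Tensor.slice i P j * (A⁻¹ * U)) a b = 0 := by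
    intro j a b hba
    have heq : U⁻¹ * Tensor.slice i P j * (A⁻¹ * U)
        = U⁻¹ * (Tensor.slice i P j * A⁻¹) * U := by
      simp only [Matrix.mul_assoc]
    rw [heq]
    exact htri j a b hba
  have hUi : IsUnit (U⁻¹)ᵀ.det := by
    rw [Matrix.det_transpose]
    exact Matrix.isUnit_nonsing_inv_det U hU
  have hAU : IsUnit (A⁻¹ * U).det := by
    rw [Matrix.det_mul]
    exact (Matrix.isUnit_nonsing_inv_det A hA).mul hU
  fin_cases i
  · refine ⟨1, (U⁻¹)ᵀ, A⁻¹ * U, by simp, hUi, hAU, ?_⟩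
    intro j a b hba
    have main' : ∀ j a b : Fin n, b < a →
        (U⁻¹ * Tensor.slice 0 P j * (A⁻¹ * U)) a b = 0 := main
    show Tensor.slice 0 (P.act 1 (U⁻¹)ᵀ (A⁻¹ * U)) j a b = 0
    rw [Tensor.slice_act0, Matrix.transpose_transpose]
    exact main' j a b hba
  · refine ⟨(U⁻¹)ᵀ, 1, A⁻¹ * U, hUi, by simp, hAU, ?_⟩
    intro j a b hba
    have main' : ∀ j a b : Fin n, b < a →
        (U⁻¹ * Tensor.slice 1 P j * (A⁻¹ * U)) a b = 0 := main
    show Tensor.slice 1 (P.act (U⁻¹)ᵀ 1 (A⁻¹ * U)) j a b = 0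
    rw [Tensor.slice_act1, Matrix.transpose_transpose]
    exact main' j a b hba
  · refine ⟨(U⁻¹)ᵀ, A⁻¹ * U, 1, hUi, hAU, by simp, ?_⟩
    intro j a b hba
    have main' : ∀ j a b : Fin n, b < a →
        (U⁻¹ * Tensor.slice 2 P j * (A⁻¹ * U)) a b = 0 := main
    show Tensor.slice 2 (P.act (U⁻¹)ᵀ (A⁻¹ * U) 1) j a b = 0
    rw [Tensor.slice_act2, Matrix.transpose_transpose]
    exact main' j a b hba
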